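/- arXiv:2002.12563 — 3 statements merged into one kernel-verified Lean document; each statement's English description precedes it below -/
import Mathlib

section
/- Under the data model and the output-weight assumption, if for each i ∈ [n] the matrix W_i^* ∈ V_i^k (all columns in V_i) minimizes l_i over V_i^k, then W^* = Σ_{i=1}^n W_i^* minimizes the total population loss l over all of ℝ^{d×k}. -/
open MeasureTheory Finset RealInnerProductSpace

noncomputable section

set_option linter.unusedVariables false

/-- Output coordinate `i` of the one-hidden-layer ReLU network with hidden weights `W`
(columns `W j`), biases `b` and output weights `v`:  `f_i(W;x) = ∑_j v_{i,j} σ(⟨w_j,x⟩ - b_j)`. -/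
def netOut {d n k : ℕ} (v : Fin n → Fin k → ℝ) (b : Fin k → ℝ)
    (W : Fin k → EuclideanSpace ℝ (Fin d)) (x : EuclideanSpace ℝ (Fin d)) (i : Fin n) : ℝ :=
  ∑ j, v i j * max (⟪W j, x⟫ - b j) 0

/-- Hinge loss of the sample `(x, y)`:  `l(W;{x,y}) = ∑_{i ≠ y} max{0, 1 - f_y + f_i}`. -/
def hingeLoss {d n k : ℕ} (v : Fin n → Fin k → ℝ) (b : Fin k → ℝ)
    (W : Fin k → EuclideanSpace ℝ (Fin d)) (x : EuclideanSpace ℝ (Fin d)) (y : Fin n) : ℝ :=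
  ∑ i ∈ univ.filter (· ≠ y), max 0 (1 - netOut v b W x y + netOut v b W x i)

/-- Class-`i` population loss `l_i(W) = E_{(x,y)∼D_i}[l(W;{x,y})]` (under `D_i` the label is
almost surely `i`, so `D_i` is recorded as a measure on the inputs). -/
def popLoss {d n k : ℕ} (D : Measure (EuclideanSpace ℝ (Fin d))) (v : Fin n → Fin k → ℝ)
    (b : Fin k → ℝ) (i : Fin n) (W : Fin k → EuclideanSpace ℝ (Fin d)) : ℝ :=
  ∫ x, hingeLoss v b W x i ∂D

/-- The explicit column-wise gradient formula
`∇_{w_j} l_i(W) = -∑_{r≠i} (v_{i,j}-v_{r,j}) E[1_{Ω_{i,r}(W)} 1_{Ω_{w_j}} x]`. -/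
def gradCol {d n k : ℕ} (D : Measure (EuclideanSpace ℝ (Fin d))) (v : Fin n → Fin k → ℝ)
    (b : Fin k → ℝ) (i : Fin n) (W : Fin k → EuclideanSpace ℝ (Fin d)) (j : Fin k) :
    EuclideanSpace ℝ (Fin d) :=
  -∑ r ∈ univ.filter (· ≠ i), (v i j - v r j) •
    ∫ x in {x | netOut v b W x i < netOut v b W x r + 1} ∩ {x | b j < ⟪W j, x⟫}, x ∂D

/-- Total population loss `l = (1/n) ∑ᵢ lᵢ`. -/
def totalLoss {d n k : ℕ} (D : Fin n → Measure (EuclideanSpace ℝ (Fin d)))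
    (v : Fin n → Fin k → ℝ) (b : Fin k → ℝ) (W : Fin k → EuclideanSpace ℝ (Fin d)) : ℝ :=
  (n : ℝ)⁻¹ * ∑ i, popLoss (D i) v b i W

/-- Column `j` of the gradient of the total population loss, `∇l(W) = (1/n) ∑ᵢ ∇lᵢ(W)`. -/
def gradTotal {d n k : ℕ} (D : Fin n → Measure (EuclideanSpace ℝ (Fin d)))
    (v : Fin n → Fin k → ℝ) (b : Fin k → ℝ) (W : Fin k → EuclideanSpace ℝ (Fin d)) (j : Fin k) :
    EuclideanSpace ℝ (Fin d) :=
  (n : ℝ)⁻¹ • ∑ i, gradCol (D i) v b i W j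

/-- `|W|`: the sum of the Euclidean norms of the columns of `W`. -/
def matNorm {d k : ℕ} (W : Fin k → EuclideanSpace ℝ (Fin d)) : ℝ := ∑ j, ‖W j‖

/-- The misclassification event `{x : ŷ(W;x) ≠ i}`: `i` is not the (unique) argmax of the
network output at `x`. -/
def misclass {d n k : ℕ} (v : Fin n → Fin k → ℝ) (b : Fin k → ℝ)
    (W : Fin k → EuclideanSpace ℝ (Fin d)) (i : Fin n) : Set (EuclideanSpace ℝ (Fin d)) :=
  {x | ¬ ∀ r, r ≠ i → netOut v b W x r < netOut v b W x i}

/-- The geometric condition for a set `s` of (unit) vectors: the origin lies in the interior of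
the convex hull of `s`. -/
def geomCond {d : ℕ} (s : Set (EuclideanSpace ℝ (Fin d))) : Prop :=
  (0 : EuclideanSpace ℝ (Fin d)) ∈ interior (convexHull ℝ s)

/-- The set of normalized weight columns `w_j/|w_j|` over the neurons `j` with `v_{i,j} > 0`. -/
def posNeurons {d n k : ℕ} (v : Fin n → Fin k → ℝ) (i : Fin n)
    (W : Fin k → EuclideanSpace ℝ (Fin d)) : Set (EuclideanSpace ℝ (Fin d)) :=
  {y | ∃ j, 0 < v i j ∧ (‖W j‖)⁻¹ • W j = y}



lemma popLoss_congr_inner {d n k : ℕ} (D : Measure (EuclideanSpace ℝ (Fin d)))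
    (v : Fin n → Fin k → ℝ) (b : Fin k → ℝ) (i : Fin n)
    (W W' : Fin k → EuclideanSpace ℝ (Fin d)) (S : Set (EuclideanSpace ℝ (Fin d)))
    (hD : D Sᶜ = 0) (h : ∀ x ∈ S, ∀ j, ⟪W j, x⟫ = ⟪W' j, x⟫) :
    popLoss D v b i W = popLoss D v b i W' := by
  unfold popLoss
  apply MeasureTheory.integral_congr_ae
  have hS : ∀ᵐ x ∂D, x ∈ S := by
    rw [MeasureTheory.ae_iff]
    exact hD
  filter_upwards [hS] with x hx
  have hw : ∀ r, netOut v b W x r = netOut v b W' x r := by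
    intro r
    unfold netOut
    refine Finset.sum_congr rfl fun j _ => ?_
    rw [h x hx j]
  unfold hingeLoss
  refine Finset.sum_congr rfl fun r _ => ?_
  rw [hw, hw]

/-- Lemma (decomposition, part 1): if `W_i^*` (with all columns in `V i`) minimizes `l_i` over
`V_i^k` for each `i`, then `W^* = ∑ᵢ W_i^*` minimizes the total loss `l` over all matrices. -/
theorem decompose_min {d n k : ℕ} (hn : 2 ≤ n)
    -- Data model: orthogonal subspaces spanning the whole space, class-`i` data supported on `V i`
    (V : Fin n → Submodule ℝ (EuclideanSpace ℝ (Fin d)))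
    (horth : ∀ i j : Fin n, i ≠ j → ∀ x ∈ V i, ∀ y ∈ V j, ⟪x, y⟫ = 0)
    (hspan : (⨆ i, V i) = ⊤)
    (D : Fin n → Measure (EuclideanSpace ℝ (Fin d)))
    (hprob : ∀ i, IsProbabilityMeasure (D i))
    (hsupport : ∀ i, D i (V i) = 1)
    -- Output-weight assumption
    (v : Fin n → Fin k → ℝ) (c : ℝ) (hc : 0 < c)
    (hv1 : ∀ i : Fin n, ∃ j, 0 < v i j)
    (hv2 : ∀ (i : Fin n) (j : Fin k), 0 < v i j → ∀ r, r ≠ i → v r j < 0)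
    (hv3 : ∀ i j, |v i j| = c)
    (b : Fin k → ℝ) (hb : ∀ j, 0 ≤ b j)
    (Wstar : Fin n → Fin k → EuclideanSpace ℝ (Fin d))
    (hWmem : ∀ i j, Wstar i j ∈ V i)
    (hWmin : ∀ i, ∀ W' : Fin k → EuclideanSpace ℝ (Fin d), (∀ j, W' j ∈ V i) →
      popLoss (D i) v b i (Wstar i) ≤ popLoss (D i) v b i W') :
    ∀ W' : Fin k → EuclideanSpace ℝ (Fin d),
      totalLoss D v b (fun j => ∑ i, Wstar i j) ≤ totalLoss D v b W' := by
  intro W'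
  unfold totalLoss
  apply mul_le_mul_of_nonneg_left _ (by positivity)
  apply Finset.sum_le_sum
  intro i _
  haveI := hprob i
  have hnull : (D i) ((V i : Set (EuclideanSpace ℝ (Fin d)))ᶜ) = 0 := by
    have hm : MeasurableSet (V i : Set (EuclideanSpace ℝ (Fin d))) :=
      (Submodule.closed_of_finiteDimensional (V i)).measurableSet
    rw [measure_compl hm (measure_ne_top _ _), hsupport i, measure_univ]
    simp
  have key1 : popLoss (D i) v b i (fun j => ∑ r, Wstar r j) = popLoss (D i) v b i (Wstar i) := by
    apply popLoss_congr_inner _ _ _ _ _ _ _ hnull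
    intro x hx j
    rw [sum_inner]
    rw [Finset.sum_eq_single i]
    · intro r _ hr
      exact horth r i hr _ (hWmem r j) x hx
    · simp
  have key2 : popLoss (D i) v b i (Wstar i) ≤ popLoss (D i) v b i W' := by
    set P := Submodule.orthogonalProjection (V i)
    have heq : popLoss (D i) v b i W' = popLoss (D i) v b i (fun j => (P (W' j) : EuclideanSpace ℝ (Fin d))) := by
      apply popLoss_congr_inner _ _ _ _ _ _ _ hnull
      intro x hx j
      have hmem := Submodule.sub_starProjection_mem_orthogonal (K := V i) (W' j)
      have := (Submodule.mem_orthogonal (V i) _).mp hmem x hx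
      have h2 : ⟪W' j - (P (W' j) : EuclideanSpace ℝ (Fin d)), x⟫ = 0 := by
        rw [real_inner_comm]; exact this
      rw [inner_sub_left] at h2
      linarith
    rw [heq]
    exact hWmin i _ (fun j => (P (W' j)).2)
  rw [key1]
  exact key2
end
end

section
/- Under the data model and the output-weight assumption, fix i ∈ [n], W ∈ ℝ^{d×k}, and η > 0, and let W' = W − η∇l_i(W), where ∇l_i is given by the explicit gradient formula. Then for every r ≠ i, l(W'; {x,r}) = l(W; {x,r}) for D_r-almost all (x,r). -/
open MeasureTheory Finset RealInnerProductSpace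

noncomputable section

set_option linter.unusedVariables false

/-- Lemma (decomposition, part 2): one gradient step on `l_i` does not change the sample loss
on class-`r` data for any `r ≠ i`, `D_r`-almost surely. -/
theorem decompose_step {d n k : ℕ} (hn : 2 ≤ n)
    -- Data model: orthogonal subspaces spanning the whole space, class-`i` data supported on `V i`
    (V : Fin n → Submodule ℝ (EuclideanSpace ℝ (Fin d)))
    (horth : ∀ i j : Fin n, i ≠ j → ∀ x ∈ V i, ∀ y ∈ V j, ⟪x, y⟫ = 0)
    (hspan : (⨆ i, V i) = ⊤)
    (D : Fin n → Measure (EuclideanSpace ℝ (Fin d)))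
    (hprob : ∀ i, IsProbabilityMeasure (D i))
    (hsupport : ∀ i, D i (V i) = 1)
    -- Output-weight assumption
    (v : Fin n → Fin k → ℝ) (c : ℝ) (hc : 0 < c)
    (hv1 : ∀ i : Fin n, ∃ j, 0 < v i j)
    (hv2 : ∀ (i : Fin n) (j : Fin k), 0 < v i j → ∀ r, r ≠ i → v r j < 0)
    (hv3 : ∀ i j, |v i j| = c)
    (b : Fin k → ℝ) (hb : ∀ j, 0 ≤ b j)
    (i : Fin n) (η : ℝ) (hη : 0 < η) (W : Fin k → EuclideanSpace ℝ (Fin d)) :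
    ∀ r : Fin n, r ≠ i →
      ∀ᵐ x ∂(D r),
        hingeLoss v b (fun j => W j - η • gradCol (D i) v b i W j) x r = hingeLoss v b W x r := by
  intro r hr
  have hprob' := hprob i
  -- a.e. z under D i lies in V i
  have hmeas : MeasurableSet (V i : Set (EuclideanSpace ℝ (Fin d))) :=
    (Submodule.closed_of_finiteDimensional (V i)).measurableSet
  have hae : ∀ᵐ z ∂(D i), z ∈ (V i : Set (EuclideanSpace ℝ (Fin d))) := by
    rw [ae_iff]
    have := measure_compl hmeas (measure_ne_top (D i) _)
    simp only [hsupport i, measure_univ] at this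
    rw [tsub_self] at this
    exact this
  -- inner of any gradient column with any x ∈ V r is 0
  have hinner : ∀ x ∈ V r, ∀ j : Fin k, ⟪x, gradCol (D i) v b i W j⟫ = 0 := by
    intro x hx j
    unfold gradCol
    rw [inner_neg_right, inner_sum]
    have hzero : ∀ r' ∈ univ.filter (· ≠ i),
        ⟪x, (v i j - v r' j) •
          ∫ z in {z | netOut v b W z i < netOut v b W z r' + 1} ∩ {z | b j < ⟪W j, z⟫}, z ∂(D i)⟫
          = 0 := by
      intro r' _
      rw [real_inner_smul_right]
      set S := {z | netOut v b W z i < netOut v b W z r' + 1} ∩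
        {z : EuclideanSpace ℝ (Fin d) | b j < ⟪W j, z⟫}
      by_cases hInt : Integrable (fun z : EuclideanSpace ℝ (Fin d) => z) ((D i).restrict S)
      · have h1 : ⟪x, ∫ z in S, z ∂(D i)⟫ = ∫ z in S, ⟪x, z⟫ ∂(D i) :=
          (integral_inner hInt x).symm
        have h2 : ∫ z in S, ⟪x, z⟫ ∂(D i) = 0 := by
          apply integral_eq_zero_of_ae
          filter_upwards [ae_restrict_of_ae hae] with z hz
          exact horth r i hr x hx z hz
        rw [h1, h2, mul_zero]
      · rw [integral_undef hInt]
        simp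
    rw [Finset.sum_eq_zero hzero, neg_zero]
  -- on V r, the updated weights give the same net output
  filter_upwards [(ae_iff.2 (by
      have := measure_compl ((Submodule.closed_of_finiteDimensional (V r)).measurableSet)
        (measure_ne_top (D r) _)
      simp only [hsupport r, measure_univ] at this
      rw [tsub_self] at this
      exact this) :
      ∀ᵐ x ∂(D r), x ∈ (V r : Set (EuclideanSpace ℝ (Fin d))))] with x hx
  have hnet : ∀ s : Fin n,
      netOut v b (fun j => W j - η • gradCol (D i) v b i W j) x s = netOut v b W x s := by
    intro s
    unfold netOut
    refine Finset.sum_congr rfl fun j _ => ?_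
    have h0 : ⟪gradCol (D i) v b i W j, x⟫ = 0 := by
      rw [real_inner_comm]; exact hinner x hx j
    have : ⟪W j - η • gradCol (D i) v b i W j, x⟫ = ⟪W j, x⟫ := by
      rw [inner_sub_left, real_inner_smul_left, h0, mul_zero, sub_zero]
    rw [this]
  unfold hingeLoss
  refine Finset.sum_congr rfl fun s _ => ?_
  rw [hnet, hnet]
end
end

section
/- Under the data model, the output-weight assumption, and zero biases b_j = 0, fix i ∈ [n], W ∈ V_i^k with columns w_j, and η > 0, and set w_j' = w_j − η∇_{w_j} l_i(W) (explicit gradient formula). If v_{i,j} > 0, then |w_j'| ≥ |w_j|. -/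
open MeasureTheory Finset RealInnerProductSpace

noncomputable section

set_option linter.unusedVariables false

lemma aux_inner_set_integral_nonneg {d : ℕ} (c : EuclideanSpace ℝ (Fin d))
    (μ : Measure (EuclideanSpace ℝ (Fin d))) (S : Set (EuclideanSpace ℝ (Fin d)))
    (hS : MeasurableSet S) (hpos : ∀ x ∈ S, 0 ≤ ⟪c, x⟫) :
    0 ≤ ⟪c, ∫ x in S, x ∂μ⟫ := by
  by_cases hInt : Integrable (fun x => x) (μ.restrict S)
  · rw [← integral_inner hInt]
    exact setIntegral_nonneg hS hpos
  · rw [integral_undef hInt, inner_zero_right]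

lemma netOut_continuous {d n k : ℕ} (v : Fin n → Fin k → ℝ) (b : Fin k → ℝ)
    (W : Fin k → EuclideanSpace ℝ (Fin d)) (i : Fin n) :
    Continuous (fun x => netOut v b W x i) := by
  unfold netOut
  exact continuous_finset_sum _ fun j _ => continuous_const.mul
    (((continuous_const.inner continuous_id).sub continuous_const).max continuous_const)

/-- Lemma (norm growth): with zero biases, a gradient step on `l_i` does not decrease the norm
of any column `w_j` with `v_{i,j} > 0`. -/
theorem pos_neuron_nondecreasing {d n k : ℕ} (hn : 2 ≤ n)
    -- Data model: orthogonal subspaces spanning the whole space, class-`i` data supported on `V i`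
    (V : Fin n → Submodule ℝ (EuclideanSpace ℝ (Fin d)))
    (horth : ∀ i j : Fin n, i ≠ j → ∀ x ∈ V i, ∀ y ∈ V j, ⟪x, y⟫ = 0)
    (hspan : (⨆ i, V i) = ⊤)
    (D : Fin n → Measure (EuclideanSpace ℝ (Fin d)))
    (hprob : ∀ i, IsProbabilityMeasure (D i))
    (hsupport : ∀ i, D i (V i) = 1)
    -- Boundedness of the data: `m_i ≤ |x| ≤ M_i` almost surely
    (m M : Fin n → ℝ) (hm : ∀ i, 0 < m i) (hmM : ∀ i, m i ≤ M i)
    (hbdd : ∀ i, D i {x | m i ≤ ‖x‖ ∧ ‖x‖ ≤ M i} = 1)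
    -- Output-weight assumption
    (v : Fin n → Fin k → ℝ) (c : ℝ) (hc : 0 < c)
    (hv1 : ∀ i : Fin n, ∃ j, 0 < v i j)
    (hv2 : ∀ (i : Fin n) (j : Fin k), 0 < v i j → ∀ r, r ≠ i → v r j < 0)
    (hv3 : ∀ i j, |v i j| = c)
    (b : Fin k → ℝ) (hb0 : ∀ j, b j = 0)
    (i : Fin n) (W : Fin k → EuclideanSpace ℝ (Fin d)) (hWmem : ∀ j, W j ∈ V i)
    (η : ℝ) (hη : 0 < η) :
    ∀ j, 0 < v i j → ‖W j‖ ≤ ‖W j - η • gradCol (D i) v b i W j‖ := by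
  intro j hvij
  set g := gradCol (D i) v b i W j with hg
  have hginner : ⟪W j, g⟫ ≤ 0 := by
    rw [hg, gradCol, inner_neg_right, neg_nonpos, inner_sum]
    apply Finset.sum_nonneg
    intro r hr
    rw [Finset.mem_filter] at hr
    have hvr : v r j < 0 := hv2 i j hvij r hr.2
    rw [real_inner_smul_right]
    apply mul_nonneg (by linarith)
    apply aux_inner_set_integral_nonneg
    · apply MeasurableSet.inter
      · have hc : Continuous (fun x => netOut v b W x i - netOut v b W x r) :=
          (netOut_continuous v b W i).sub (netOut_continuous v b W r)
        have : {x | netOut v b W x i < netOut v b W x r + 1}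
            = (fun x => netOut v b W x i - netOut v b W x r) ⁻¹' Set.Iio 1 := by
          ext x; simp [Set.mem_preimage]; constructor <;> intro <;> linarith
        rw [this]
        exact (isOpen_Iio.preimage hc).measurableSet
      · have hc : Continuous (fun x : EuclideanSpace ℝ (Fin d) => ⟪W j, x⟫) :=
          continuous_const.inner continuous_id
        exact (isOpen_Ioi.preimage hc).measurableSet
    · intro x hx
      have := hx.2
      simp only [Set.mem_setOf_eq, hb0 j] at this
      linarith
  have hu : 0 ≤ ⟪W j, -(η • g)⟫ := by
    rw [inner_neg_right, real_inner_smul_right]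
    nlinarith
  have heq : W j - η • g = W j + -(η • g) := by abel
  rw [heq]
  have hsq := norm_add_sq_real (W j) (-(η • g))
  nlinarith [norm_nonneg (W j + -(η • g)), norm_nonneg (W j), sq_nonneg ‖-(η • g)‖]
end
end
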